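/- Let Y be a union of affine hyperplanes in ℝⁿ that is closed (as a set), locally a finite union of hyperplanes, and locally invariant under reflections: for every point p and every two hyperplanes H₁, H₂ of Y through p, the reflection of H₁ across H₂ agrees with a hyperplane of Y near p. Then the family of hyperplanes of Y is globally invariant under reflection across any of its non-parallel members: if H₁, H₂ ∈ Y are not parallel, the reflection of H₁ across H₂ is again a hyperplane of Y. -/

import Mathlib

open Real Set Metric

noncomputable section

/-- `γ` restricted to the parameter set `s` is an isometric (unit-speed) embedding. -/
def IsGeodesicOn {X : Type*} [MetricSpace X] (γ : ℝ → X) (s : Set ℝ) : Prop :=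
  ∀ a ∈ s, ∀ b ∈ s, dist (γ a) (γ b) = |a - b|

/-- A geodesic segment parametrized on `[a,b]` from `x` to `y`. -/
def IsGeodesicSeg {X : Type*} [MetricSpace X] (γ : ℝ → X) (a b : ℝ) (x y : X) : Prop :=
  IsGeodesicOn γ (Set.Icc a b) ∧ γ a = x ∧ γ b = y

/-- A local geodesic parametrized on `[a,b]`. -/
def IsLocalGeodesic {X : Type*} [MetricSpace X] (γ : ℝ → X) (a b : ℝ) : Prop :=
  ∀ t ∈ Set.Icc a b, ∃ ε > 0, IsGeodesicOn γ (Set.Icc (t - ε) (t + ε) ∩ Set.Icc a b)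

/-- Any two points are joined by a geodesic. -/
def GeodesicSpace (X : Type*) [MetricSpace X] : Prop :=
  ∀ x y : X, ∃ γ : ℝ → X, IsGeodesicSeg γ 0 (dist x y) x y

/-- The distance in the unit 2-sphere from the vertex `P̄` of a spherical comparison
triangle with side lengths `a = d(Q,R)`, `b = d(R,P)`, `c = d(P,Q)` to the point at
arclength `t` along the side `Q̄R̄` (spherical law of cosines). -/
def sphCompDist (a b c t : ℝ) : ℝ :=
  Real.arccos (Real.cos c * Real.cos t +
    Real.sin c * Real.sin t *
      ((Real.cos b - Real.cos a * Real.cos c) / (Real.sin a * Real.sin c)))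

/-- CAT(1): distances < π are realized by geodesics, and geodesic triangles of
perimeter < 2π are at least as thin as their comparison triangles in the unit sphere. -/
def IsCAT1 (X : Type*) [MetricSpace X] : Prop :=
  (∀ x y : X, dist x y < π → ∃ γ : ℝ → X, IsGeodesicSeg γ 0 (dist x y) x y) ∧
  ∀ (p q r : X) (γ : ℝ → X), IsGeodesicSeg γ 0 (dist q r) q r →
    dist p q + dist q r + dist r p < 2 * π →
    ∀ t ∈ Set.Icc (0:ℝ) (dist q r),
      dist p (γ t) ≤ sphCompDist (dist q r) (dist r p) (dist p q) t

/-- CAT(0): geodesic space satisfying the CN (midpoint) comparison inequality. -/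
def IsCAT0 (X : Type*) [MetricSpace X] : Prop :=
  GeodesicSpace X ∧
  ∀ p q r m : X, dist q m = dist q r / 2 → dist m r = dist q r / 2 →
    dist p m ^ 2 ≤ (dist p q ^ 2 + dist p r ^ 2) / 2 - dist q r ^ 2 / 4

/-- Euclidean comparison angle at `x` of the points `p`, `q`. -/
def compAngle {X : Type*} [MetricSpace X] (x p q : X) : ℝ :=
  Real.arccos ((dist x p ^ 2 + dist x q ^ 2 - dist p q ^ 2) / (2 * dist x p * dist x q))

/-- The Alexandrov (upper) angle at `x` between two curves `γ`, `σ` emanating from `x`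
(parametrized with `γ 0 = σ 0 = x`). -/
def alexAngle {X : Type*} [MetricSpace X] (x : X) (γ σ : ℝ → X) : ℝ :=
  ⨅ ε : {ε : ℝ // 0 < ε}, ⨆ s ∈ Set.Ioc (0:ℝ) ε.1, ⨆ t ∈ Set.Ioc (0:ℝ) ε.1,
    compAngle x (γ s) (σ t)

/-- The affine hyperplane with unit normal `h.1` and offset `h.2`. -/
def hypPlane {n : ℕ} (h : EuclideanSpace ℝ (Fin n) × ℝ) : Set (EuclideanSpace ℝ (Fin n)) :=
  {x | (inner ℝ h.1 x : ℝ) = h.2}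

/-- Reflection across the affine hyperplane with unit normal `h.1` and offset `h.2`. -/
def hypRefl {n : ℕ} (h : EuclideanSpace ℝ (Fin n) × ℝ) (x : EuclideanSpace ℝ (Fin n)) :
    EuclideanSpace ℝ (Fin n) :=
  x - (2 * ((inner ℝ h.1 x : ℝ) - h.2)) • h.1

-- nonparallel planes meet
lemma planes_meet {n : ℕ} (h₁ h₂ : EuclideanSpace ℝ (Fin n) × ℝ)
    (hu : ‖h₁.1‖ = 1) (hv : ‖h₂.1‖ = 1) (hne : ¬ (h₁.1 = h₂.1 ∨ h₁.1 = -h₂.1)) :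
    ∃ p, p ∈ hypPlane h₁ ∧ p ∈ hypPlane h₂ := by
  push_neg at hne
  obtain ⟨hne1, hne2⟩ := hne
  set u := h₁.1; set v := h₂.1
  set c : ℝ := inner ℝ u v with hc
  have hlt : c < 1 := (inner_lt_one_iff_real_of_norm_eq_one hu hv).2 hne1
  have hgt : -c < 1 := by
    have : (inner ℝ u (-v) : ℝ) < 1 := by
      refine (inner_lt_one_iff_real_of_norm_eq_one hu (by simp [hv])).2 hne2
    simpa [inner_neg_right] using this
  have hden : 1 - c ^ 2 ≠ 0 := by nlinarith
  set s : ℝ := (h₁.2 - c * h₂.2) / (1 - c ^ 2)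
  set t : ℝ := (h₂.2 - c * h₁.2) / (1 - c ^ 2)
  refine ⟨s • u + t • v, ?_, ?_⟩
  · show (inner ℝ u (s • u + t • v) : ℝ) = h₁.2
    rw [inner_add_right, real_inner_smul_right, real_inner_smul_right,
      real_inner_self_eq_norm_sq, hu, ← hc]
    simp only [s, t]
    field_simp
    ring
  · show (inner ℝ v (s • u + t • v) : ℝ) = h₂.2
    rw [inner_add_right, real_inner_smul_right, real_inner_smul_right,
      real_inner_self_eq_norm_sq, hv, real_inner_comm, ← hc]
    simp only [s, t]
    field_simp
    ring

lemma hypRefl_involutive {n : ℕ} (h : EuclideanSpace ℝ (Fin n) × ℝ) (hv : ‖h.1‖ = 1) :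
    Function.Involutive (hypRefl h) := by
  intro x
  unfold hypRefl
  have h1 : (inner ℝ h.1 (x - (2 * ((inner ℝ h.1 x : ℝ) - h.2)) • h.1) : ℝ)
      = (inner ℝ h.1 x : ℝ) - (2 * ((inner ℝ h.1 x : ℝ) - h.2)) := by
    rw [inner_sub_right, real_inner_smul_right, real_inner_self_eq_norm_sq, hv]
    ring
  rw [h1]
  rw [sub_sub, ← add_smul]
  have : 2 * ((inner ℝ h.1 x : ℝ) - h.2) +
      2 * ((inner ℝ h.1 x : ℝ) - (2 * ((inner ℝ h.1 x : ℝ) - h.2)) - h.2) = 0 := by ring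
  rw [this, zero_smul, sub_zero]

lemma refl_image_plane {n : ℕ} (h₁ h₂ : EuclideanSpace ℝ (Fin n) × ℝ) (hv : ‖h₂.1‖ = 1) :
    hypRefl h₂ '' hypPlane h₁ =
      hypPlane (h₁.1 - (2 * (inner ℝ h₁.1 h₂.1 : ℝ)) • h₂.1,
        h₁.2 - 2 * h₂.2 * (inner ℝ h₁.1 h₂.1 : ℝ)) := by
  rw [Set.image_eq_preimage_of_inverse (hypRefl_involutive h₂ hv).leftInverse
    (hypRefl_involutive h₂ hv).rightInverse]
  ext x
  simp only [Set.mem_preimage, hypPlane, Set.mem_setOf_eq, hypRefl]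
  rw [inner_sub_right, real_inner_smul_right]
  rw [inner_sub_left, real_inner_smul_left]
  constructor <;> intro hx <;> nlinarith [hx]

lemma plane_subset_of_ball {n : ℕ} (h h' : EuclideanSpace ℝ (Fin n) × ℝ)
    (p : EuclideanSpace ℝ (Fin n)) (ε : ℝ) (hε : 0 < ε) (hp : p ∈ hypPlane h)
    (hsub : hypPlane h ∩ Metric.ball p ε ⊆ hypPlane h') :
    hypPlane h ⊆ hypPlane h' := by
  intro x hx
  have hp' : p ∈ hypPlane h' := hsub ⟨hp, Metric.mem_ball_self hε⟩
  set t : ℝ := ε / (2 * (‖x - p‖ + 1)) with ht_def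
  have hnorm : (0:ℝ) < ‖x - p‖ + 1 := by positivity
  have ht : 0 < t := by positivity
  have hy : p + t • (x - p) ∈ hypPlane h ∩ Metric.ball p ε := by
    constructor
    · show (inner ℝ h.1 (p + t • (x - p)) : ℝ) = h.2
      rw [inner_add_right, real_inner_smul_right, inner_sub_right]
      rw [show (inner ℝ h.1 x : ℝ) = h.2 from hx, show (inner ℝ h.1 p : ℝ) = h.2 from hp]
      ring
    · rw [Metric.mem_ball, dist_eq_norm, add_sub_cancel_left, norm_smul,
        Real.norm_eq_abs, abs_of_pos ht]
      calc t * ‖x - p‖ < t * (2 * (‖x - p‖ + 1)) := by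
            apply mul_lt_mul_of_pos_left _ ht; nlinarith
        _ = ε := by rw [ht_def]; field_simp
  have hy' := hsub hy
  have e1 : (inner ℝ h'.1 (p + t • (x - p)) : ℝ) = h'.2 := hy'
  have e2 : (inner ℝ h'.1 p : ℝ) = h'.2 := hp'
  rw [inner_add_right, real_inner_smul_right, inner_sub_right, e2] at e1
  have h0 : t * ((inner ℝ h'.1 x : ℝ) - h'.2) = 0 := by linarith
  rcases mul_eq_zero.1 h0 with h0 | h0
  · exact absurd h0 (ne_of_gt ht)
  · show (inner ℝ h'.1 x : ℝ) = h'.2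
    linarith

lemma plane_eq_of_ball_eq {n : ℕ} (h h' : EuclideanSpace ℝ (Fin n) × ℝ)
    (p : EuclideanSpace ℝ (Fin n)) (ε : ℝ) (hε : 0 < ε) (hp : p ∈ hypPlane h)
    (heq : hypPlane h ∩ Metric.ball p ε = hypPlane h' ∩ Metric.ball p ε) :
    hypPlane h = hypPlane h' := by
  have hp' : p ∈ hypPlane h' := by
    have : p ∈ hypPlane h' ∩ Metric.ball p ε := heq ▸ ⟨hp, Metric.mem_ball_self hε⟩
    exact this.1
  apply Set.Subset.antisymm
  · exact plane_subset_of_ball h h' p ε hε hp (by rw [heq]; exact Set.inter_subset_left)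
  · exact plane_subset_of_ball h' h p ε hε hp' (by rw [← heq]; exact Set.inter_subset_left)

/-- A closed, locally finite union of affine hyperplanes in ℝⁿ which is
locally invariant under reflections is globally invariant under reflection across any
of its members in any non-parallel member. -/
theorem locally_reflective_arrangement_is_reflective
    (n : ℕ) (𝓗 : Set (EuclideanSpace ℝ (Fin n) × ℝ))
    (hunit : ∀ h ∈ 𝓗, ‖h.1‖ = 1)
    (hclosed : IsClosed (⋃ h ∈ 𝓗, hypPlane h))
    (hlocfin : ∀ p : EuclideanSpace ℝ (Fin n), ∃ ε > 0,
      {h ∈ 𝓗 | (hypPlane h ∩ Metric.ball p ε).Nonempty}.Finite)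
    (hlocinv : ∀ p : EuclideanSpace ℝ (Fin n), ∃ ε > 0,
      ∀ h₂ ∈ 𝓗, p ∈ hypPlane h₂ →
        ∀ h₁ ∈ 𝓗, (hypPlane h₁ ∩ Metric.ball p ε).Nonempty →
          ∃ h₃ ∈ 𝓗, hypRefl h₂ '' hypPlane h₁ ∩ Metric.ball p ε =
            hypPlane h₃ ∩ Metric.ball p ε) :
    ∀ h₁ ∈ 𝓗, ∀ h₂ ∈ 𝓗, ¬ (h₁.1 = h₂.1 ∨ h₁.1 = -h₂.1) →
      ∃ h₃ ∈ 𝓗, hypRefl h₂ '' hypPlane h₁ = hypPlane h₃ := by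
  intro h₁ hh₁ h₂ hh₂ hpar
  obtain ⟨p, hp1, hp2⟩ := planes_meet h₁ h₂ (hunit h₁ hh₁) (hunit h₂ hh₂) hpar
  obtain ⟨ε, hε, hinv⟩ := hlocinv p
  obtain ⟨h₃, hh₃, heq⟩ := hinv h₂ hh₂ hp2 h₁ hh₁ ⟨p, hp1, Metric.mem_ball_self hε⟩
  set h' : EuclideanSpace ℝ (Fin n) × ℝ :=
    (h₁.1 - (2 * (inner ℝ h₁.1 h₂.1 : ℝ)) • h₂.1, h₁.2 - 2 * h₂.2 * (inner ℝ h₁.1 h₂.1 : ℝ))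
  have himg : hypRefl h₂ '' hypPlane h₁ = hypPlane h' := refl_image_plane h₁ h₂ (hunit h₂ hh₂)
  rw [himg] at heq ⊢
  have hp' : p ∈ hypPlane h' := by
    show (inner ℝ (h₁.1 - (2 * (inner ℝ h₁.1 h₂.1 : ℝ)) • h₂.1) p : ℝ) = _
    rw [inner_sub_left, real_inner_smul_left]
    rw [show (inner ℝ h₂.1 p : ℝ) = h₂.2 from hp2, show (inner ℝ h₁.1 p : ℝ) = h₁.2 from hp1]
    ring
  exact ⟨h₃, hh₃, plane_eq_of_ball_eq h' h₃ p ε hε hp' heq⟩
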